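/- For every tree T of order n, the middle 3-rainbow domination number satisfies γ*_{r3}(T) ≤ n + α'(T), where α'(T) is the matching number of T. -/

import Mathlib

open SimpleGraph Finset

/-- A `k`-rainbow dominating function on a graph `H`. -/
def IsRDF {W : Type*} (H : SimpleGraph W) (k : ℕ) (f : W → Finset (Fin k)) : Prop :=
  ∀ w, f w = ∅ → ∀ c : Fin k, ∃ u, H.Adj w u ∧ c ∈ f u

/-- The weight of a rainbow dominating function. -/
noncomputable def rdfWeight {W : Type*} [Fintype W] {k : ℕ} (f : W → Finset (Fin k)) : ℕ :=
  ∑ w, (f w).card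

/-- The `k`-rainbow domination number of a graph. -/
noncomputable def rdn {W : Type*} [Fintype W] (H : SimpleGraph W) (k : ℕ) : ℕ :=
  sInf {n | ∃ f : W → Finset (Fin k), IsRDF H k f ∧ rdfWeight f = n}

/-- The middle graph of `G`, on vertex set `V(G) ⊕ E(G)`. -/
def middleGraph {V : Type*} (G : SimpleGraph V) : SimpleGraph (V ⊕ G.edgeSet) where
  Adj x y :=
    match x, y with
    | Sum.inl _, Sum.inl _ => False
    | Sum.inl v, Sum.inr e => v ∈ (e : Sym2 V)
    | Sum.inr e, Sum.inl v => v ∈ (e : Sym2 V)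
    | Sum.inr e, Sum.inr f => e ≠ f ∧ ∃ v, v ∈ (e : Sym2 V) ∧ v ∈ (f : Sym2 V)
  symm := by
    constructor
    rintro (v | e) (w | f) h
    · exact h.elim
    · exact h
    · exact h
    · exact ⟨Ne.symm h.1, h.2.imp fun v hv => ⟨hv.2, hv.1⟩⟩
  loopless := by
    constructor
    rintro (v | e) h
    · exact h.elim
    · exact h.1 rfl

/-- The middle `k`-rainbow domination number `γ*_{rk}(G)`. -/
noncomputable def mrdn {V : Type*} [Fintype V] (G : SimpleGraph V) (k : ℕ) : ℕ :=
  letI := Classical.decEq V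
  letI : DecidableRel G.Adj := fun _ _ => Classical.dec _
  rdn (middleGraph G) k

/-- The `k`-rainbow domatic number: the maximum size of a family of `k`-rainbow
dominating functions with `∑ i |f i v| ≤ k` for each vertex `v`. -/
noncomputable def rdomatic {W : Type*} (H : SimpleGraph W) (k : ℕ) : ℕ :=
  sSup {d | ∃ F : Fin d → W → Finset (Fin k), Function.Injective F ∧
    (∀ i, IsRDF H k (F i)) ∧ ∀ w, (∑ i, (F i w).card) ≤ k}

/-- The matching number `α'(G)`. -/
noncomputable def matchingNumber {V : Type*} [Fintype V] (G : SimpleGraph V) : ℕ :=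
  sSup {n | ∃ M : Finset (Sym2 V), ↑M ⊆ G.edgeSet ∧
    (∀ e ∈ M, ∀ f ∈ M, e ≠ f → ∀ v : V, ¬(v ∈ e ∧ v ∈ f)) ∧ M.card = n}

/-- A maximum matching exists. -/
lemma exists_max_matching {V : Type*} [Fintype V] (T : SimpleGraph V) :
    ∃ M : Finset (Sym2 V), ↑M ⊆ T.edgeSet ∧
      (∀ e ∈ M, ∀ f ∈ M, e ≠ f → ∀ v : V, ¬(v ∈ e ∧ v ∈ f)) ∧
      M.card = matchingNumber T := by
  classical
  have hne : {n | ∃ M : Finset (Sym2 V), ↑M ⊆ T.edgeSet ∧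
      (∀ e ∈ M, ∀ f ∈ M, e ≠ f → ∀ v : V, ¬(v ∈ e ∧ v ∈ f)) ∧ M.card = n}.Nonempty :=
    ⟨0, ∅, by simp, by simp, by simp⟩
  have hbdd : BddAbove {n | ∃ M : Finset (Sym2 V), ↑M ⊆ T.edgeSet ∧
      (∀ e ∈ M, ∀ f ∈ M, e ≠ f → ∀ v : V, ¬(v ∈ e ∧ v ∈ f)) ∧ M.card = n} := by
    refine ⟨Fintype.card (Sym2 V), ?_⟩
    rintro n ⟨M, -, -, rfl⟩
    exact M.card_le_univ.trans (le_of_eq (Finset.card_univ))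
  have := Nat.sSup_mem hne hbdd
  obtain ⟨M, h1, h2, h3⟩ := this
  exact ⟨M, h1, h2, h3⟩

/-- For every tree `T` of order `n`, `γ*_{r3}(T) ≤ n + α'(T)`. -/
theorem stmt9 {V : Type*} [Fintype V] (T : SimpleGraph V) (hT : T.IsTree) :
    mrdn T 3 ≤ Fintype.card V + matchingNumber T := by
  classical
  obtain ⟨M, hMsub, hMdisj, hMcard⟩ := exists_max_matching T
  -- maximality of M
  have hmax : ∀ e : T.edgeSet, (e : Sym2 V) ∉ M →
      ∃ s ∈ M, ∃ v : V, v ∈ s ∧ v ∈ (e : Sym2 V) := by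
    intro e heM
    by_contra h
    push_neg at h
    have hmem : (insert (e : Sym2 V) M).card ∈ {n | ∃ M : Finset (Sym2 V),
        ↑M ⊆ T.edgeSet ∧
        (∀ e ∈ M, ∀ f ∈ M, e ≠ f → ∀ v : V, ¬(v ∈ e ∧ v ∈ f)) ∧ M.card = n} := by
      refine ⟨insert (e : Sym2 V) M, ?_, ?_, rfl⟩
      · intro s hs
        simp only [Finset.coe_insert, Set.mem_insert_iff] at hs
        rcases hs with rfl | hs
        · exact e.2
        · exact hMsub hs
      · intro a ha b hb hab v hv
        simp only [Finset.mem_insert] at ha hb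
        rcases ha with rfl | ha <;> rcases hb with rfl | hb
        · exact hab rfl
        · exact h b hb v hv.2 hv.1
        · exact h a ha v hv.1 hv.2
        · exact hMdisj a ha b hb hab v hv
    have hle : (insert (e : Sym2 V) M).card ≤ matchingNumber T := by
      have hbdd : BddAbove {n | ∃ M : Finset (Sym2 V), ↑M ⊆ T.edgeSet ∧
          (∀ e ∈ M, ∀ f ∈ M, e ≠ f → ∀ v : V, ¬(v ∈ e ∧ v ∈ f)) ∧ M.card = n} := by
        refine ⟨Fintype.card (Sym2 V), ?_⟩
        rintro n ⟨M, -, -, rfl⟩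
        exact M.card_le_univ.trans (le_of_eq (Finset.card_univ))
      exact le_csSup hbdd hmem
    rw [Finset.card_insert_of_notMem heM, hMcard] at hle
    omega
  -- the matched vertices
  set matched : Finset V := M.biUnion (fun s => Finset.univ.filter (· ∈ s)) with hmatched
  -- the rainbow dominating function
  set f : V ⊕ T.edgeSet → Finset (Fin 3) := fun x =>
    match x with
    | Sum.inl v => if v ∈ matched then ∅ else {0}
    | Sum.inr e => if (e : Sym2 V) ∈ M then Finset.univ else ∅ with hf
  have hRDF : IsRDF (middleGraph T) 3 f := by
    rintro (v | e) hw c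
    · -- vertex case
      have hv : v ∈ matched := by
        by_contra hv
        simp only [hf, hv, if_neg, if_false] at hw
        exact Finset.singleton_ne_empty _ hw
      simp only [hmatched, Finset.mem_biUnion, Finset.mem_filter] at hv
      obtain ⟨s, hsM, -, hvs⟩ := hv
      refine ⟨Sum.inr ⟨s, hMsub hsM⟩, hvs, ?_⟩
      simp [hf, hsM]
    · -- edge case
      have he : (e : Sym2 V) ∉ M := by
        by_contra he
        simp only [hf, he, if_true] at hw
        have : (c : Fin 3) ∈ (Finset.univ : Finset (Fin 3)) := Finset.mem_univ c
        rw [hw] at this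
        exact absurd this (Finset.notMem_empty c)
      obtain ⟨s, hsM, v, hvs, hve⟩ := hmax e he
      refine ⟨Sum.inr ⟨s, hMsub hsM⟩, ⟨?_, v, hve, hvs⟩, ?_⟩
      · intro hc
        apply he
        rw [show (e : Sym2 V) = s from congrArg Subtype.val hc]
        exact hsM
      · simp [hf, hsM]
  -- weight computation
  have hedges : ∀ s ∈ M, (Finset.univ.filter (· ∈ s)).card = 2 := by
    intro s hsM
    induction s with
    | h a b =>
      have hab : a ≠ b := by
        rintro rfl
        exact T.loopless.irrefl a (T.mem_edgeSet.mp (hMsub hsM))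
      have : Finset.univ.filter (· ∈ s(a, b)) = {a, b} := by
        ext x
        simp [Sym2.mem_iff]
      rw [this, Finset.card_insert_of_notMem (by simpa using hab), Finset.card_singleton]
  have hmatchedcard : 2 * M.card ≤ matched.card := by
    rw [hmatched, Finset.card_biUnion]
    · rw [Finset.sum_congr rfl hedges, Finset.sum_const, smul_eq_mul, mul_comm]
    · intro a ha b hb hab
      simp only [Finset.disjoint_left, Finset.mem_filter]
      rintro v ⟨-, hva⟩ ⟨-, hvb⟩
      exact hMdisj a ha b hb hab v ⟨hva, hvb⟩
  have hweight : rdfWeight f ≤ Fintype.card V + matchingNumber T := by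
    rw [rdfWeight, Fintype.sum_sum_type]
    have h1 : ∑ v : V, (f (Sum.inl v)).card = Fintype.card V - matched.card := by
      have heq : ∑ v : V, (f (Sum.inl v)).card
          = ∑ v : V, (if v ∈ matched then 0 else 1) := by
        apply Finset.sum_congr rfl
        intro v _
        by_cases hv : v ∈ matched <;> simp [hf, hv]
      rw [heq, Finset.sum_ite, Finset.sum_const, Finset.sum_const]
      simp only [smul_eq_mul, mul_zero, mul_one, zero_add]
      rw [Finset.filter_not, Finset.card_sdiff_of_subset (Finset.filter_subset _ _),
        Finset.card_univ, Finset.filter_univ_mem]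
    have h2 : ∑ e : T.edgeSet, (f (Sum.inr e)).card = 3 * M.card := by
      have heq : ∑ e : T.edgeSet, (f (Sum.inr e)).card
          = ∑ e : T.edgeSet, (if (e : Sym2 V) ∈ M then 3 else 0) := by
        apply Finset.sum_congr rfl
        intro e _
        by_cases he : (e : Sym2 V) ∈ M <;> simp [hf, he]
      have himg : (Finset.univ.filter fun e : T.edgeSet => (e : Sym2 V) ∈ M).image
          Subtype.val = M := by
        ext s
        simp only [Finset.mem_image, Finset.mem_filter, Finset.mem_univ, true_and]
        constructor
        · rintro ⟨e, he, rfl⟩; exact he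
        · intro hs; exact ⟨⟨s, hMsub hs⟩, hs, rfl⟩
      have hcard : (Finset.univ.filter fun e : T.edgeSet => (e : Sym2 V) ∈ M).card
          = M.card := by
        have h := Finset.card_image_of_injective
          (Finset.univ.filter fun e : T.edgeSet => (e : Sym2 V) ∈ M)
          Subtype.val_injective
        rw [himg] at h
        exact h.symm
      rw [heq, Finset.sum_ite, Finset.sum_const, Finset.sum_const]
      simp only [smul_eq_mul, mul_zero, add_zero]
      rw [hcard, mul_comm]
    have hmle : matched.card ≤ Fintype.card V := Finset.card_le_univ _
    rw [h1, h2, ← hMcard]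
    omega
  calc mrdn T 3 ≤ rdfWeight f := Nat.sInf_le ⟨f, hRDF, rfl⟩
    _ ≤ _ := hweight
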